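/- arXiv:1301.4255 — 2 statements merged into one kernel-verified Lean document; each statement's English description precedes it below -/
import Mathlib

section
/- Proposition (even case): let n ≥ 4 be even. Then the subgroup of Equiv.Perm (Fin n → ZMod 12) generated by the cyclically consecutive contextual inversions {p i (i+1) : i ∈ Fin n} (indices taken cyclically in Fin n) is isomorphic to the semidirect product of the additive group Fin (n−2) → ZMod 12 by ZMod 2, where the nontrivial element of ZMod 2 acts by negation (a ↦ −a). -/
/-- Contextual inversion `p i j` on pitch-class segments of length `n`. -/
def p {n : ℕ} (i j : Fin n) (x : Fin n → ZMod 12) : Fin n → ZMod 12 :=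
  fun r => x i + x j - x r

/-- Contextual inversion `p i j` as a permutation (it is an involution). -/
def pEquiv {n : ℕ} (i j : Fin n) : Equiv.Perm (Fin n → ZMod 12) where
  toFun := p i j
  invFun := p i j
  left_inv x := by funext r; simp only [p]; ring
  right_inv x := by funext r; simp only [p]; ring

/-- The negation automorphism `a ↦ -a` of the abelian group `Fin m → ZMod 12`,
written multiplicatively. -/
def negAut (m : ℕ) : MulAut (Multiplicative (Fin m → ZMod 12)) :=
  { toFun := fun a => a⁻¹
    invFun := fun a => a⁻¹
    left_inv := fun a => inv_inv a
    right_inv := fun a => inv_inv a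
    map_mul' := fun a b => by show (a * b)⁻¹ = a⁻¹ * b⁻¹; rw [mul_inv_rev, mul_comm] }

/-- The action of `ZMod 2` on `Fin m → ZMod 12` in which the nontrivial element
acts by negation. -/
def negHom (m : ℕ) :
    Multiplicative (ZMod 2) →* MulAut (Multiplicative (Fin m → ZMod 12)) where
  toFun g := if Multiplicative.toAdd g = 0 then 1 else negAut m
  map_one' := by simp
  map_mul' := by
    have hsq : negAut m * negAut m = 1 := by
      ext x
      simp [negAut]
    have h2 : ∀ c : ZMod 2, c = 0 ∨ c = 1 := by decide
    have hadd : (1 : ZMod 2) + 1 = 0 := by decide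
    intro a b
    rcases h2 (Multiplicative.toAdd a) with ha | ha <;>
      rcases h2 (Multiplicative.toAdd b) with hb | hb <;>
      simp [toAdd_mul, ha, hb, hadd, hsq]

namespace Stmt13

/-- The linear functional attached to `a`. -/
def lf (n : ℕ) (a : Fin (n-2) → ZMod 12) (x : Fin n → ZMod 12) : ZMod 12 :=
  ∑ i : Fin (n-2), a i * (x ⟨i.1, by have := i.2; omega⟩ - x ⟨i.1 + 2, by have := i.2; omega⟩)

variable {n : ℕ}

lemma lf_add (a b : Fin (n-2) → ZMod 12) (x : Fin n → ZMod 12) :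
    lf n (a + b) x = lf n a x + lf n b x := by
  rw [lf, lf, lf, ← Finset.sum_add_distrib]
  exact Finset.sum_congr rfl fun i _ => by simp only [Pi.add_apply]; ring

lemma lf_neg (a : Fin (n-2) → ZMod 12) (x : Fin n → ZMod 12) :
    lf n (-a) x = - lf n a x := by
  rw [lf, lf, ← Finset.sum_neg_distrib]
  exact Finset.sum_congr rfl fun i _ => by simp only [Pi.neg_apply]; ring

lemma lf_zero (x : Fin n → ZMod 12) : lf n 0 x = 0 := by simp [lf]

lemma lf_shift (a : Fin (n-2) → ZMod 12) (x : Fin n → ZMod 12) (c : ZMod 12) :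
    lf n a (fun r => x r + c) = lf n a x := by
  rw [lf, lf]
  exact Finset.sum_congr rfl fun i _ => by ring

lemma lf_flip (a : Fin (n-2) → ZMod 12) (x : Fin n → ZMod 12) (c : ZMod 12) :
    lf n a (fun r => c - x r) = - lf n a x := by
  rw [lf, lf, ← Finset.sum_neg_distrib]
  exact Finset.sum_congr rfl fun i _ => by ring


@[simp] lemma pEquiv_apply (i j : Fin n) (x : Fin n → ZMod 12) :
    pEquiv i j x = p i j x := rfl

lemma pE_sq (i j : Fin n) : pEquiv i j * pEquiv i j = 1 := by
  apply Equiv.ext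
  intro x
  simp only [Equiv.Perm.mul_apply, pEquiv_apply, Equiv.Perm.one_apply]
  funext r
  simp only [p]
  ring

lemma pE_inv (i j : Fin n) : (pEquiv i j)⁻¹ = pEquiv i j := rfl

lemma lf_p (a : Fin (n-2) → ZMod 12) (i j : Fin n) (x : Fin n → ZMod 12) :
    lf n a (p i j x) = - lf n a x := lf_flip a x (x i + x j)

/-- The translation homomorphism. -/
def Thom (n : ℕ) : Multiplicative (Fin (n-2) → ZMod 12) →* Equiv.Perm (Fin n → ZMod 12) where
  toFun a :=
    { toFun := fun x r => x r + lf n (Multiplicative.toAdd a) x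
      invFun := fun x r => x r - lf n (Multiplicative.toAdd a) x
      left_inv := fun x => by
        funext r
        show (x r + lf n _ x) - lf n _ (fun r => x r + lf n _ x) = x r
        rw [lf_shift]; ring
      right_inv := fun x => by
        funext r
        show (x r - lf n _ x) + lf n _ (fun r => x r - lf n _ x) = x r
        have : (fun r => x r - lf n (Multiplicative.toAdd a) x)
            = fun r => x r + (- lf n (Multiplicative.toAdd a) x) := by funext r; ring
        rw [this, lf_shift]; ring }
  map_one' := by
    apply Equiv.ext
    intro x
    funext r
    show x r + lf n (Multiplicative.toAdd (1 : Multiplicative (Fin (n-2) → ZMod 12))) x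
        = (1 : Equiv.Perm (Fin n → ZMod 12)) x r
    rw [toAdd_one, lf_zero, add_zero, Equiv.Perm.one_apply]
  map_mul' a b := by
    apply Equiv.ext
    intro x
    funext r
    show x r + lf n (Multiplicative.toAdd (a * b)) x
        = (fun r => x r + lf n (Multiplicative.toAdd b) x) r
          + lf n (Multiplicative.toAdd a) (fun r => x r + lf n (Multiplicative.toAdd b) x)
    rw [lf_shift, toAdd_mul, lf_add]
    ring

@[simp] lemma Thom_apply (a : Multiplicative (Fin (n-2) → ZMod 12)) (x : Fin n → ZMod 12) :
    Thom n a x = fun r => x r + lf n (Multiplicative.toAdd a) x := rfl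

/-- The reflection homomorphism. -/
def Shom (n : ℕ) [NeZero n] : Multiplicative (ZMod 2) →* Equiv.Perm (Fin n → ZMod 12) where
  toFun g := if Multiplicative.toAdd g = 0 then 1 else pEquiv 0 1
  map_one' := by simp
  map_mul' a b := by
    have h2 : ∀ c : ZMod 2, c = 0 ∨ c = 1 := by decide
    rcases h2 (Multiplicative.toAdd a) with ha | ha <;>
      rcases h2 (Multiplicative.toAdd b) with hb | hb <;>
      simp [toAdd_mul, ha, hb, show (1:ZMod 2)+1 = 0 from by decide, pE_sq]

lemma compat (n : ℕ) [NeZero n] :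
    ∀ g, (Thom n).comp ((negHom (n-2)) g).toMonoidHom
      = (MulAut.conj (Shom n g)).toMonoidHom.comp (Thom n) := by
  intro g
  have h2 : ∀ c : ZMod 2, c = 0 ∨ c = 1 := by decide
  refine MonoidHom.ext fun a => ?_
  rcases h2 (Multiplicative.toAdd g) with hg | hg
  · have hg1 : g = 1 := by
      have := hg
      rwa [← toAdd_one, Multiplicative.toAdd.injective.eq_iff] at this
    simp [negHom, Shom, hg1]
  · have hng : negHom (n-2) g = negAut (n-2) := by
      simp only [negHom, MonoidHom.coe_mk, OneHom.coe_mk, hg]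
      norm_num
    have hsg : Shom n g = pEquiv 0 1 := by
      simp only [Shom, MonoidHom.coe_mk, OneHom.coe_mk, hg]
      norm_num
    simp only [MonoidHom.comp_apply, MulEquiv.coe_toMonoidHom, hng, hsg,
      MulAut.conj_apply, pE_inv]
    apply Equiv.ext
    intro x
    funext r
    simp only [Equiv.Perm.mul_apply, Thom_apply, pEquiv_apply, p]
    rw [show Multiplicative.toAdd ((negAut (n-2)) a) = -(Multiplicative.toAdd a) from rfl,
      lf_neg, lf_p]
    ring

/-- The assembled homomorphism from the semidirect product. -/
def phi (n : ℕ) [NeZero n] :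
    (Multiplicative (Fin (n - 2) → ZMod 12)) ⋊[negHom (n - 2)] Multiplicative (ZMod 2)
      →* Equiv.Perm (Fin n → ZMod 12) :=
  SemidirectProduct.lift (Thom n) (Shom n) (compat n)


lemma lf_gadget (a : Fin (n-2) → ZMod 12) (k : Fin (n-2)) :
    lf n a (fun r => if r.1 % 2 = k.1 % 2 ∧ r.1 ≤ k.1 then 1 else 0) = a k := by
  rw [lf, Finset.sum_eq_single k]
  · have hk := k.2
    rw [if_pos ⟨rfl, le_refl _⟩,
      if_neg (show ¬((k.1+2) % 2 = k.1 % 2 ∧ k.1+2 ≤ k.1) from by omega)]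
    ring
  · intro i _ hik
    have hik' : i.1 ≠ k.1 := fun h => hik (Fin.ext h)
    have hi := i.2
    have : (if i.1 % 2 = k.1 % 2 ∧ i.1 ≤ k.1 then (1:ZMod 12) else 0)
        = (if (i.1+2) % 2 = k.1 % 2 ∧ i.1+2 ≤ k.1 then (1:ZMod 12) else 0) := by
      split_ifs with h1 h2 h2
      · rfl
      · omega
      · omega
      · rfl
    simp only []
    rw [this]
    ring
  · intro h
    exact absurd (Finset.mem_univ k) h

lemma phi_inj (n : ℕ) [NeZero n] (hn : 4 ≤ n) : Function.Injective (phi n) := by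
  rw [injective_iff_map_eq_one]
  rintro ⟨a, e⟩ hy
  have hy' : Thom n a * Shom n e = 1 := hy
  have h2 : ∀ c : ZMod 2, c = 0 ∨ c = 1 := by decide
  have hv0 : ((0 : Fin n) : ℕ) = 0 := rfl
  have hv1 : ((1 : Fin n) : ℕ) = 1 := by rw [Fin.val_one']; exact Nat.mod_eq_of_lt (by omega)
  rcases h2 (Multiplicative.toAdd e) with he | he
  · -- reflection part trivial
    have he1 : e = 1 := by
      rwa [← toAdd_one, Multiplicative.toAdd.injective.eq_iff] at he
    have hT : Thom n a = 1 := by rwa [he1, map_one, mul_one] at hy'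
    have hl : ∀ x : Fin n → ZMod 12, lf n (Multiplicative.toAdd a) x = 0 := by
      intro x
      have := congrFun (Equiv.ext_iff.1 hT x) 0
      simp only [Thom_apply, Equiv.Perm.one_apply] at this
      exact (add_eq_left).1 this
    have ha : a = 1 := by
      rw [← ofAdd_toAdd a, ← ofAdd_zero]
      congr 1
      funext k
      have := hl (fun r => if r.1 % 2 = k.1 % 2 ∧ r.1 ≤ k.1 then 1 else 0)
      rw [lf_gadget] at this
      exact this
    rw [ha, he1]
    rfl
  · -- reflection part nontrivial : contradiction
    exfalso
    have hse : Shom n e = pEquiv 0 1 := by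
      simp only [Shom, MonoidHom.coe_mk, OneHom.coe_mk, he]
      norm_num
    rw [hse] at hy'
    set x₀ : Fin n → ZMod 12 := Pi.single (⟨2, by omega⟩ : Fin n) 1 with hx₀
    have e2 := congrFun (Equiv.ext_iff.1 hy' x₀) ⟨2, by omega⟩
    have e3 := congrFun (Equiv.ext_iff.1 hy' x₀) ⟨3, by omega⟩
    simp only [Equiv.Perm.mul_apply, Thom_apply, pEquiv_apply, p, Equiv.Perm.one_apply] at e2 e3
    have hs0 : x₀ 0 = 0 := by
      rw [hx₀, Pi.single_apply, if_neg]
      intro h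
      have := congrArg Fin.val h
      rw [hv0] at this
      simp at this
    have hs1 : x₀ 1 = 0 := by
      rw [hx₀, Pi.single_apply, if_neg]
      intro h
      have := congrArg Fin.val h
      rw [hv1] at this
      simp at this
    have hs2 : x₀ ⟨2, by omega⟩ = 1 := by rw [hx₀, Pi.single_apply, if_pos rfl]
    have hs3 : x₀ ⟨3, by omega⟩ = 0 := by
      rw [hx₀, Pi.single_apply, if_neg]
      intro h
      have := congrArg Fin.val h
      simp at this
    rw [hs0, hs1, hs2] at e2
    rw [hs0, hs1, hs3] at e3
    have : (0:ZMod 12) + 0 - 1 + lf n (Multiplicative.toAdd a) (p 0 1 x₀) = 1 := e2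
    have h0 : (0:ZMod 12) + 0 - 0 + lf n (Multiplicative.toAdd a) (p 0 1 x₀) = 0 := e3
    have : (2 : ZMod 12) = 0 := by
      have := this
      rw [show ((0:ZMod 12) + 0 - 1 + lf n (Multiplicative.toAdd a) (p 0 1 x₀))
          = ((0:ZMod 12) + 0 - 0 + lf n (Multiplicative.toAdd a) (p 0 1 x₀)) - 1 from by ring,
        h0] at this
      linear_combination -this
    exact absurd this (by decide)


lemma add1 [NeZero n] (j : Fin n) (h : j.1 + 1 < n) : ((j + 1 : Fin n) : ℕ) = j.1 + 1 := by
  rw [Fin.val_add, Fin.val_one']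
  rw [Nat.mod_eq_of_lt (show (1:ℕ) < n by omega)]
  exact Nat.mod_eq_of_lt h

lemma lf_single (i : Fin (n-2)) (v : ZMod 12) (x : Fin n → ZMod 12) :
    lf n (Pi.single i v) x
      = v * (x ⟨i.1, by have := i.2; omega⟩ - x ⟨i.1 + 2, by have := i.2; omega⟩) := by
  rw [lf, Finset.sum_eq_single i]
  · rw [Pi.single_eq_same]
  · intro b _ hbi
    rw [Pi.single_eq_of_ne hbi, zero_mul]
  · intro h
    exact absurd (Finset.mem_univ i) h

/-- key product computation -/
lemma TmulP [NeZero n] (a : Fin (n-2) → ZMod 12) (i : Fin n) (x : Fin n → ZMod 12) (r : Fin n) :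
    (Thom n (Multiplicative.ofAdd a) * pEquiv i (i+1)) x r
      = x i + x (i+1) - x r - lf n a x := by
  simp only [Equiv.Perm.mul_apply, Thom_apply, pEquiv_apply, p, toAdd_ofAdd]
  rw [lf_p]
  ring

lemma Tsingle_eq [NeZero n] (i : Fin (n-2)) :
    Thom n (Multiplicative.ofAdd (Pi.single i 1))
      = pEquiv ((⟨i.1, by have := i.2; omega⟩ : Fin n) + 1)
          ((⟨i.1, by have := i.2; omega⟩ : Fin n) + 1 + 1)
        * pEquiv (⟨i.1, by have := i.2; omega⟩ : Fin n)
          ((⟨i.1, by have := i.2; omega⟩ : Fin n) + 1) := by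
  have hi := i.2
  have h1 : (⟨i.1, by omega⟩ : Fin n) + 1 = (⟨i.1 + 1, by omega⟩ : Fin n) :=
    Fin.ext (add1 _ (show i.1 + 1 < n by omega))
  have h2 : (⟨i.1 + 1, by omega⟩ : Fin n) + 1 = (⟨i.1 + 2, by omega⟩ : Fin n) :=
    Fin.ext (add1 _ (show i.1 + 2 < n by omega))
  apply Equiv.ext
  intro x
  funext r
  simp only [Equiv.Perm.mul_apply, Thom_apply, pEquiv_apply, p, toAdd_ofAdd, h1, h2]
  rw [lf_single]
  ring

lemma tele_even (f : ℕ → ZMod 12) (q : ℕ) :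
    ∑ j ∈ Finset.range (2*q), (if j % 2 = 0 then f j - f (j+2) else 0) = f 0 - f (2*q) := by
  induction q with
  | zero => simp
  | succ q ih =>
    rw [show 2*(q+1) = (2*q)+1+1 by ring, Finset.sum_range_succ, Finset.sum_range_succ, ih,
      if_pos (by omega), if_neg (by omega)]
    rw [show 2*q+1+1 = 2*q+2 by ring]
    ring

/-- the even-indicator vector, whose functional is `x 0 - x (n-2)`. -/
def aeven (n : ℕ) : Fin (n-2) → ZMod 12 := fun j => if j.1 % 2 = 0 then 1 else 0

lemma lf_aeven (hn : 4 ≤ n) (heven : Even n) (x : Fin n → ZMod 12) :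
    lf n (aeven n) x = x ⟨0, by omega⟩ - x ⟨n-2, by omega⟩ := by
  obtain ⟨r, hr⟩ := heven
  obtain ⟨q, hq⟩ : ∃ q, n - 2 = 2*q := ⟨r - 1, by omega⟩
  set X : ℕ → ZMod 12 := fun t => if h : t < n then x ⟨t, h⟩ else 0 with hX
  have hstep : lf n (aeven n) x
      = ∑ j ∈ Finset.range (n-2), (if j % 2 = 0 then X j - X (j+2) else 0) := by
    rw [lf, ← Fin.sum_univ_eq_sum_range (fun j => if j % 2 = 0 then X j - X (j+2) else 0) (n-2)]
    refine Finset.sum_congr rfl fun i _ => ?_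
    have hi := i.2
    rw [hX]
    simp only [aeven]
    rw [dif_pos (show i.1 < n by omega), dif_pos (show i.1 + 2 < n by omega)]
    split_ifs with h
    · rw [one_mul]
    · rw [zero_mul]
  have htele := tele_even X q
  rw [← hq] at htele
  rw [hstep, htele, hX]
  simp only []
  rw [dif_pos (show (0:ℕ) < n by omega), dif_pos (show n - 2 < n by omega)]

/-- The generating set. -/
def genSet (n : ℕ) [NeZero n] : Set (Equiv.Perm (Fin n → ZMod 12)) :=
  {g | ∃ i : Fin n, g = pEquiv i (i + 1)}

lemma Tsingle_mem [NeZero n] (i : Fin (n-2)) (v : ZMod 12) :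
    Thom n (Multiplicative.ofAdd (Pi.single i v)) ∈ Subgroup.closure (genSet n) := by
  have hsv : Pi.single i v = (v.val • Pi.single i (1:ZMod 12) : Fin (n-2) → ZMod 12) := by
    funext k
    by_cases hk : k = i
    · subst hk
      rw [Pi.single_eq_same, Pi.smul_apply, Pi.single_eq_same, nsmul_eq_mul, mul_one,
        ZMod.natCast_val, ZMod.cast_id]
    · rw [Pi.single_eq_of_ne hk, Pi.smul_apply, Pi.single_eq_of_ne hk, smul_zero]
  rw [hsv, ofAdd_nsmul, map_pow]
  refine pow_mem ?_ _
  rw [Tsingle_eq]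
  exact mul_mem (Subgroup.subset_closure ⟨_, rfl⟩) (Subgroup.subset_closure ⟨_, rfl⟩)

lemma Thom_mem [NeZero n] (a : Multiplicative (Fin (n-2) → ZMod 12)) :
    Thom n a ∈ Subgroup.closure (genSet n) := by
  have key : ∀ s : Finset (Fin (n-2)),
      Thom n (Multiplicative.ofAdd
        (∑ i ∈ s, Pi.single i (Multiplicative.toAdd a i))) ∈ Subgroup.closure (genSet n) := by
    intro s
    induction s using Finset.induction_on with
    | empty =>
      rw [Finset.sum_empty, ofAdd_zero, map_one]
      exact one_mem _
    | insert _ _ hns ih =>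
      rw [Finset.sum_insert hns, ofAdd_add, map_mul]
      exact mul_mem (Tsingle_mem _ _) ih
  have := key Finset.univ
  rwa [Finset.univ_sum_single, ofAdd_toAdd] at this

lemma gen_mem [NeZero n] (hn : 4 ≤ n) (heven : Even n) (i : Fin n) :
    pEquiv i (i + 1) ∈ (phi n).range := by
  suffices H : ∀ t, ∀ ht : t < n, pEquiv (⟨t, ht⟩ : Fin n) ((⟨t, ht⟩ : Fin n) + 1) ∈ (phi n).range
    by exact H i.1 i.2
  intro t
  induction t with
  | zero =>
    intro ht
    have h0 : (⟨0, ht⟩ : Fin n) = 0 := rfl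
    rw [h0, zero_add]
    refine ⟨SemidirectProduct.inr (Multiplicative.ofAdd (1 : ZMod 2)), ?_⟩
    rw [phi, SemidirectProduct.lift_inr]
    simp only [Shom, MonoidHom.coe_mk, OneHom.coe_mk, toAdd_ofAdd]
    rw [if_neg (by decide)]
  | succ t ih =>
    intro ht
    have ht' : t < n := by omega
    have hIH := ih ht'
    have hA : (⟨t, ht'⟩ : Fin n) + 1 = (⟨t+1, ht⟩ : Fin n) :=
      Fin.ext (add1 _ (show t + 1 < n from ht))
    by_cases hcase : t < n - 2
    · have hB : (⟨t+1, ht⟩ : Fin n) + 1 = (⟨t+2, by omega⟩ : Fin n) :=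
        Fin.ext (add1 _ (show t + 2 < n by omega))
      have hkey : pEquiv (⟨t+1, ht⟩ : Fin n) ((⟨t+1, ht⟩ : Fin n) + 1)
          = Thom n (Multiplicative.ofAdd (Pi.single (⟨t, hcase⟩ : Fin (n-2)) 1))
            * pEquiv (⟨t, ht'⟩ : Fin n) ((⟨t, ht'⟩ : Fin n) + 1) := by
        apply Equiv.ext
        intro x
        funext r
        rw [TmulP, lf_single]
        simp only [pEquiv_apply, p, hA, hB]
        ring
      rw [hkey]
      exact mul_mem ⟨SemidirectProduct.inl _, by rw [phi, SemidirectProduct.lift_inl]⟩ hIH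
    · have ht2 : t = n - 2 := by omega
      have hB : (⟨t+1, ht⟩ : Fin n) + 1 = (⟨0, by omega⟩ : Fin n) := by
        apply Fin.ext
        rw [Fin.val_add, Fin.val_one']
        show ((t+1) + 1 % n) % n = 0
        rw [Nat.mod_eq_of_lt (show 1 < n by omega)]
        rw [show t + 1 + 1 = n by omega, Nat.mod_self]
      have hkey : pEquiv (⟨t+1, ht⟩ : Fin n) ((⟨t+1, ht⟩ : Fin n) + 1)
          = Thom n (Multiplicative.ofAdd (-(aeven n)))
            * pEquiv (⟨t, ht'⟩ : Fin n) ((⟨t, ht'⟩ : Fin n) + 1) := by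
        apply Equiv.ext
        intro x
        funext r
        rw [TmulP, lf_neg, lf_aeven hn heven]
        simp only [pEquiv_apply, p, hA, hB]
        rw [show (⟨t, ht'⟩ : Fin n) = (⟨n-2, by omega⟩ : Fin n) from Fin.ext ht2]
        ring
      rw [hkey]
      exact mul_mem ⟨SemidirectProduct.inl _, by rw [phi, SemidirectProduct.lift_inl]⟩ hIH

end Stmt13

open Stmt13 in
theorem stmt13 (n : ℕ) [NeZero n] (hn : 4 ≤ n) (heven : Even n) :
    Nonempty ((Subgroup.closure
        {g : Equiv.Perm (Fin n → ZMod 12) | ∃ i : Fin n, g = pEquiv i (i + 1)}) ≃*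
      (Multiplicative (Fin (n - 2) → ZMod 12)) ⋊[negHom (n - 2)]
        Multiplicative (ZMod 2)) := by
  have hrange : (phi n).range = Subgroup.closure (genSet n) := by
    apply le_antisymm
    · rintro g ⟨y, rfl⟩
      rw [← SemidirectProduct.inl_left_mul_inr_right y, map_mul]
      refine mul_mem ?_ ?_
      · rw [phi, SemidirectProduct.lift_inl]
        exact Thom_mem _
      · rw [phi, SemidirectProduct.lift_inr]
        rcases (show ∀ c : ZMod 2, c = 0 ∨ c = 1 from by decide)
            (Multiplicative.toAdd y.right) with h | h
        · have h1 : y.right = 1 := by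
            rwa [← toAdd_one, Multiplicative.toAdd.injective.eq_iff] at h
          rw [h1, map_one]
          exact one_mem _
        · have h1 : Shom n y.right = pEquiv 0 1 := by
            simp only [Shom, MonoidHom.coe_mk, OneHom.coe_mk, h]
            norm_num
          rw [h1]
          exact Subgroup.subset_closure ⟨0, by rw [zero_add]⟩
    · rw [Subgroup.closure_le]
      rintro g ⟨i, rfl⟩
      exact gen_mem hn heven i
  exact ⟨(MulEquiv.subgroupCongr hrange.symm).trans
    (MonoidHom.ofInjective (phi_inj n hn)).symm⟩
end

section
/- Let n ≥ 3 be odd and let x : Fin n → ZMod 12 be a pitch-class segment satisfying Condition 1: there exists λ : Fin n → ZMod 12 with Σ_{j : Fin n} λ j · (x j − x 0) = 1 in ZMod 12. Then the orbit of x under the subgroup of Equiv.Perm (Fin n → ZMod 12) generated by the cyclically consecutive contextual inversions {p i (i+1) : i ∈ Fin n} equals the orbit of x under the T/I group, i.e. the subgroup generated by the translation T₁ (add 1 to every entry) and the inversion I (negate every entry). -/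
set_option linter.unusedSectionVars false

/-- The translation `T₁` (add `1` to every entry) as a permutation. -/
def T1 {n : ℕ} : Equiv.Perm (Fin n → ZMod 12) := Equiv.addRight 1

/-- The inversion `I` (negate every entry) as a permutation. -/
def Iop {n : ℕ} : Equiv.Perm (Fin n → ZMod 12) := Equiv.neg _

section Aux

variable {n : ℕ} [NeZero n]

lemma pEquiv_apply (i j : Fin n) (y : Fin n → ZMod 12) :
    pEquiv i j y = fun r => y i + y j - y r := rfl

lemma pEquiv_inv (i j : Fin n) : (pEquiv i j)⁻¹ = pEquiv i j := rfl

lemma T1_apply (y : Fin n → ZMod 12) : T1 y = fun r => y r + 1 := rfl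

lemma Iop_apply (y : Fin n → ZMod 12) : Iop y = fun r => -y r := rfl

lemma Iop_inv : (Iop (n := n))⁻¹ = Iop := rfl

lemma T1_inv_apply (y : Fin n → ZMod 12) : (T1 (n := n))⁻¹ y = fun r => y r - 1 := by
  have h : T1 (n := n) (fun r => y r - 1) = y := by
    funext r; simp only [T1_apply]; ring
  calc (T1 (n := n))⁻¹ y = (T1 (n:=n))⁻¹ (T1 (fun r => y r - 1)) := by rw [h]
    _ = fun r => y r - 1 := Equiv.symm_apply_apply _ _

lemma T1_pow_apply (k : ℕ) (y : Fin n → ZMod 12) :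
    ((T1 (n := n)) ^ k) y = fun r => y r + (k : ZMod 12) := by
  induction k with
  | zero => funext r; simp
  | succ m ih =>
    rw [pow_succ', Equiv.Perm.mul_apply, ih, T1_apply]
    funext r; push_cast; ring

/-- The affine set `{ ±x + c }`. -/
def Aset (x : Fin n → ZMod 12) : Set (Fin n → ZMod 12) :=
  {y | ∃ c : ZMod 12, (y = fun r => x r + c) ∨ (y = fun r => -x r + c)}

lemma x_mem_Aset (x : Fin n → ZMod 12) : x ∈ Aset x :=
  ⟨0, Or.inl (by funext r; ring)⟩

lemma pEquiv_mapsTo (i j : Fin n) (x : Fin n → ZMod 12) :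
    Set.MapsTo (pEquiv i j) (Aset x) (Aset x) := by
  rintro y ⟨c, hy | hy⟩
  · exact ⟨x i + x j + c, Or.inr (by subst hy; funext r; simp only [pEquiv_apply]; ring)⟩
  · exact ⟨c - x i - x j, Or.inl (by subst hy; funext r; simp only [pEquiv_apply]; ring)⟩

lemma zmul_eq_val_smul (z c : ZMod 12) : z * c = z.val • c := by
  rw [nsmul_eq_mul, ZMod.natCast_val, ZMod.cast_id]

end Aux

theorem stmt14 (n : ℕ) [NeZero n] (hn : 3 ≤ n) (hodd : Odd n)
    (x : Fin n → ZMod 12)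
    (hcond : ∃ lam : Fin n → ZMod 12, ∑ j : Fin n, lam j * (x j - x 0) = 1) :
    MulAction.orbit (Subgroup.closure
        {g : Equiv.Perm (Fin n → ZMod 12) | ∃ i : Fin n, g = pEquiv i (i + 1)}) x =
      MulAction.orbit (Subgroup.closure {T1 (n := n), Iop (n := n)}) x := by
  set S1 : Set (Equiv.Perm (Fin n → ZMod 12)) :=
      {g : Equiv.Perm (Fin n → ZMod 12) | ∃ i : Fin n, g = pEquiv i (i + 1)} with hS1
  set G1 := Subgroup.closure S1 with hG1
  set G2 := Subgroup.closure {T1 (n := n), Iop (n := n)} with hG2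
  -- every element of G1 commutes with constant translations
  have hcomm : ∀ g ∈ G1, ∀ (y : Fin n → ZMod 12) (c : ZMod 12),
      g (fun r => y r + c) = fun r => g y r + c := by
    intro g hg
    refine Subgroup.closure_induction (fun g hg => ?_) (fun y c => rfl)
      (fun a b _ _ ha hb y c => ?_) (fun a _ ha y c => ?_) hg
    · obtain ⟨i, rfl⟩ := hg
      intro y c
      funext r
      simp only [pEquiv_apply]
      ring
    · rw [Equiv.Perm.mul_apply, hb, ha]
      funext r
      rw [Equiv.Perm.mul_apply]
    · have h2 := ha (a⁻¹ y) c
      rw [show a (a⁻¹ y) = y from Equiv.apply_symm_apply _ _] at h2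
      calc a⁻¹ (fun r => y r + c) = a⁻¹ (a (fun r => a⁻¹ y r + c)) := by rw [h2]
        _ = fun r => a⁻¹ y r + c := Equiv.symm_apply_apply _ _
  -- orbit under G1 is contained in Aset
  have h1A : MulAction.orbit G1 x ⊆ Aset x := by
    rintro y ⟨⟨g, hg⟩, rfl⟩
    have key : ∀ g ∈ G1, Set.MapsTo g (Aset x) (Aset x) ∧
        Set.MapsTo (⇑g⁻¹) (Aset x) (Aset x) := by
      intro g hg
      refine Subgroup.closure_induction (fun g hg => ?_) ⟨fun y hy => hy, fun y hy => hy⟩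
        (fun a b _ _ ha hb => ⟨fun y hy => ha.1 (hb.1 hy), fun y hy => ?_⟩)
        (fun a _ ha => ⟨ha.2, by simpa using ha.1⟩) hg
      · obtain ⟨i, rfl⟩ := hg
        exact ⟨pEquiv_mapsTo _ _ x, by rw [pEquiv_inv]; exact pEquiv_mapsTo _ _ x⟩
      · have : (a * b)⁻¹ y = b⁻¹ (a⁻¹ y) := by rw [mul_inv_rev, Equiv.Perm.mul_apply]
        show (a * b)⁻¹ y ∈ Aset x
        rw [this]
        exact hb.2 (ha.2 hy)
    exact (key g hg).1 (x_mem_Aset x)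
  -- the subgroup of reachable translation amounts
  have hx0 : (fun r => x r + (0 : ZMod 12)) = x := by funext r; ring
  let C : AddSubgroup (ZMod 12) :=
    { carrier := {c | (fun r => x r + c) ∈ MulAction.orbit G1 x}
      zero_mem' := by
        show (fun r => x r + (0 : ZMod 12)) ∈ MulAction.orbit G1 x
        rw [hx0]; exact MulAction.mem_orbit_self x
      add_mem' := by
        rintro a b ⟨⟨g, hg⟩, hgx⟩ ⟨⟨h, hh⟩, hhx⟩
        refine ⟨⟨g * h, mul_mem hg hh⟩, ?_⟩
        show (g * h) x = fun r => x r + (a + b)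
        have h1 : h x = fun r => x r + b := hhx
        have h2 : g x = fun r => x r + a := hgx
        rw [Equiv.Perm.mul_apply, h1, hcomm g hg x b, h2]
        funext r; ring
      neg_mem' := by
        rintro a ⟨⟨g, hg⟩, hgx⟩
        refine ⟨⟨g⁻¹, inv_mem hg⟩, ?_⟩
        show g⁻¹ x = fun r => x r + (-a)
        have h2 : g x = fun r => x r + a := hgx
        have h3 : g⁻¹ (fun r => x r + a) = fun r => g⁻¹ x r + a :=
          hcomm g⁻¹ (inv_mem hg) x a
        rw [← h2, show g⁻¹ (g x) = x from Equiv.symm_apply_apply _ _] at h3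
        funext r
        have h4 : x r = g⁻¹ x r + a := congrFun h3 r
        rw [h4]; ring }
  have hCmem : ∀ c : ZMod 12, c ∈ C ↔ (fun r => x r + c) ∈ MulAction.orbit G1 x :=
    fun c => Iff.rfl
  -- consecutive double inversions give translations
  have hD : ∀ i j : Fin n, (x j + x (j + 1) - x i - x (i + 1)) ∈ C := by
    intro i j
    rw [hCmem]
    refine ⟨⟨pEquiv i (i + 1) * pEquiv j (j + 1),
      mul_mem (Subgroup.subset_closure ⟨i, rfl⟩) (Subgroup.subset_closure ⟨j, rfl⟩)⟩, ?_⟩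
    show (pEquiv i (i + 1) * pEquiv j (j + 1)) x = _
    rw [Equiv.Perm.mul_apply]
    funext r; simp only [pEquiv_apply]; ring
  have hstep : ∀ i : Fin n, x (i + 1 + 1) - x i ∈ C := by
    intro i
    have h := hD i (i + 1)
    have he : x (i + 1) + x (i + 1 + 1) - x i - x (i + 1) = x (i + 1 + 1) - x i := by ring
    rwa [he] at h
  open Fin.CommRing in
  have hchain : ∀ m : ℕ, x ((2 * m : ℕ) : Fin n) - x 0 ∈ C := by
    intro m
    induction m with
    | zero =>
      have h0 : ((2 * 0 : ℕ) : Fin n) = 0 := by norm_num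
      rw [h0, sub_self]; exact zero_mem C
    | succ m ih =>
      have hc : ((2 * (m + 1) : ℕ) : Fin n) = ((2 * m : ℕ) : Fin n) + 1 + 1 := by
        push_cast; ring
      rw [hc, ← sub_add_sub_cancel (x (((2 * m : ℕ) : Fin n) + 1 + 1))
        (x ((2 * m : ℕ) : Fin n)) (x 0)]
      exact C.add_mem (hstep _) ih
  open Fin.CommRing in
  have hall : ∀ j : Fin n, x j - x 0 ∈ C := by
    intro j
    obtain ⟨t, ht⟩ := hodd
    have h1' : ∀ a : ℕ, (2 * (a * (t + 1)) : ℕ) = a * n + a := by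
      intro a; rw [ht]; ring
    have h1 := h1' j.val
    have hk : ((2 * (j.val * (t + 1)) : ℕ) : Fin n) = j := by
      rw [h1, Nat.cast_add, Nat.cast_mul, Fin.natCast_self, mul_zero, zero_add,
        Fin.cast_val_eq_self]
    have h2 := hchain (j.val * (t + 1))
    rwa [hk] at h2
  have h1C : (1 : ZMod 12) ∈ C := by
    obtain ⟨lam, hlam⟩ := hcond
    rw [← hlam]
    exact AddSubgroup.sum_mem _ fun j _ => by
      rw [zmul_eq_val_smul]; exact AddSubgroup.nsmul_mem _ (hall j) _
  have hCtop : ∀ c : ZMod 12, c ∈ C := by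
    intro c
    have h : c = c.val • (1 : ZMod 12) := by rw [← zmul_eq_val_smul, mul_one]
    rw [h]; exact AddSubgroup.nsmul_mem _ h1C _
  have htrans : ∀ c : ZMod 12, (fun r => x r + c) ∈ MulAction.orbit G1 x :=
    fun c => (hCmem c).mp (hCtop c)
  have hneg : ∀ c : ZMod 12, (fun r => -x r + c) ∈ MulAction.orbit G1 x := by
    intro c
    obtain ⟨⟨g, hg⟩, hgx⟩ := htrans (c - x 0 - x (0 + 1))
    refine ⟨⟨pEquiv 0 (0 + 1) * g, mul_mem (Subgroup.subset_closure ⟨0, rfl⟩) hg⟩, ?_⟩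
    show (pEquiv (0 : Fin n) (0 + 1) * g) x = _
    have h2 : g x = fun r => x r + (c - x 0 - x (0 + 1)) := hgx
    rw [Equiv.Perm.mul_apply, h2]
    funext r; simp only [pEquiv_apply]; ring
  have hA1 : Aset x ⊆ MulAction.orbit G1 x := by
    rintro y ⟨c, rfl | rfl⟩
    · exact htrans c
    · exact hneg c
  -- G2 orbit contained in Aset
  have h2A : MulAction.orbit G2 x ⊆ Aset x := by
    rintro y ⟨⟨g, hg⟩, rfl⟩
    have key : ∀ g ∈ G2, Set.MapsTo g (Aset x) (Aset x) ∧
        Set.MapsTo (⇑g⁻¹) (Aset x) (Aset x) := by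
      intro g hg
      refine Subgroup.closure_induction (fun g hg => ?_) ⟨fun y hy => hy, fun y hy => hy⟩
        (fun a b _ _ ha hb => ⟨fun y hy => ha.1 (hb.1 hy), fun y hy => ?_⟩)
        (fun a _ ha => ⟨ha.2, by simpa using ha.1⟩) hg
      · rcases hg with rfl | rfl
        · constructor
          · rintro y ⟨c, hy | hy⟩
            · exact ⟨c + 1, Or.inl (by subst hy; funext r; simp only [T1_apply]; ring)⟩
            · exact ⟨c + 1, Or.inr (by subst hy; funext r; simp only [T1_apply]; ring)⟩
          · rintro y ⟨c, hy | hy⟩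
            · exact ⟨c - 1, Or.inl (by subst hy; rw [T1_inv_apply]; funext r; ring)⟩
            · exact ⟨c - 1, Or.inr (by subst hy; rw [T1_inv_apply]; funext r; ring)⟩
        · constructor
          · rintro y ⟨c, hy | hy⟩
            · exact ⟨-c, Or.inr (by subst hy; funext r; simp only [Iop_apply]; ring)⟩
            · exact ⟨-c, Or.inl (by subst hy; funext r; simp only [Iop_apply]; ring)⟩
          · rw [Iop_inv]
            rintro y ⟨c, hy | hy⟩
            · exact ⟨-c, Or.inr (by subst hy; funext r; simp only [Iop_apply]; ring)⟩
            · exact ⟨-c, Or.inl (by subst hy; funext r; simp only [Iop_apply]; ring)⟩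
      · have h3 : (a * b)⁻¹ y = b⁻¹ (a⁻¹ y) := by rw [mul_inv_rev, Equiv.Perm.mul_apply]
        show (a * b)⁻¹ y ∈ Aset x
        rw [h3]
        exact hb.2 (ha.2 hy)
    exact (key g hg).1 (x_mem_Aset x)
  -- Aset contained in G2 orbit
  have hA2 : Aset x ⊆ MulAction.orbit G2 x := by
    have hT1mem : T1 (n := n) ∈ G2 := Subgroup.subset_closure (Set.mem_insert _ _)
    have hIopmem : Iop (n := n) ∈ G2 :=
      Subgroup.subset_closure (by simp)
    rintro y ⟨c, rfl | rfl⟩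
    · refine ⟨⟨(T1 (n := n)) ^ c.val, pow_mem hT1mem _⟩, ?_⟩
      show ((T1 (n := n)) ^ c.val) x = _
      rw [T1_pow_apply]
      funext r
      rw [ZMod.natCast_val, ZMod.cast_id]
    · refine ⟨⟨(T1 (n := n)) ^ c.val * Iop, mul_mem (pow_mem hT1mem _) hIopmem⟩, ?_⟩
      show ((T1 (n := n)) ^ c.val * Iop (n := n)) x = _
      rw [Equiv.Perm.mul_apply, Iop_apply, T1_pow_apply]
      funext r
      rw [ZMod.natCast_val, ZMod.cast_id]
  exact Set.Subset.antisymm (h1A.trans hA2) (h2A.trans hA1)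
end
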